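/- Let Q be a transition kernel, F ⊆ S, f ∈ D(Q,F), and let K_f be the policy induced by f (relative to any fixed policy G). Then: (i) the support of f_S is disjoint from F; (ii) the support of f_S is closed under P_{K_f}-transitions, i.e., if f_S s > 0 and P_{K_f} s s' > 0 then f_S s' > 0; and consequently (iii) P_{K_f} s s' = 0 whenever f_S s > 0 and s' ∈ F. -/

import Mathlib

open MeasureTheory Filter Finset

noncomputable section

def IsPmf {A : Type*} [Fintype A] (p : A → ℝ) : Prop :=
  (∀ a, 0 ≤ p a) ∧ ∑ a, p a = 1

noncomputable def entropy {A : Type*} [Fintype A] (p : A → ℝ) : ℝ :=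
  -∑ a, p a * Real.log (p a)

def IsStochastic {S : Type*} [Fintype S] (P : S → S → ℝ) : Prop :=
  (∀ s s', 0 ≤ P s s') ∧ ∀ s, ∑ s', P s s' = 1

/-- The `n`-th binary digit of `ω`, as a real number `0` or `1`. -/
def bitAt (ω : ℝ) (n : ℕ) : ℝ := if ⌊ω * 2 ^ (n + 1)⌋ % 2 = 1 then 1 else 0

/-- A sequence of i.i.d. uniform random variables on `[0,1)`, extracted from the binary
digits of a single uniform sample `ω ∈ [0,1)` by interleaving. -/
noncomputable def unifAt (ω : ℝ) (k : ℕ) : ℝ := ∑' n : ℕ, bitAt ω (Nat.pair k n) / 2 ^ (n + 1)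

/-- CDF-inversion step function: given row `P s` and `x ∈ [0,1)`, produce the next state. -/
noncomputable def stepFun {S : Type*} [Fintype S] [Nonempty S] (P : S → S → ℝ) (s : S) (x : ℝ) : S :=
  (Fintype.equivFin S).symm
    ((Fin.find? (fun i => @decide (x < ∑ j ∈ Finset.Iic i, P s ((Fintype.equivFin S).symm j))
      (Classical.propDecidable _))).getD ⟨0, Fintype.card_pos⟩)

/-- The trajectory of the Markov chain with transition matrix `P` started at `s0`,
driven by the i.i.d. uniforms extracted from `ω`. -/
noncomputable def trajFun {S : Type*} [Fintype S] [Nonempty S] (P : S → S → ℝ) (s0 : S) (ω : ℝ) :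
    ℕ → S
  | 0 => s0
  | k + 1 => stepFun P (trajFun P s0 ω k) (unifAt ω k)

/-- The law `μ_{s0}` of the time-homogeneous Markov chain with transition matrix `P`
started at `s0`, as a measure on path space `ℕ → S` (each copy of `S` carrying the
discrete σ-algebra `⊤`). -/
noncomputable def chainLaw {S : Type*} [Fintype S] [Nonempty S] (P : S → S → ℝ) (s0 : S) :
    @Measure (ℕ → S) (@MeasurableSpace.pi ℕ (fun _ => S) (fun _ => ⊤)) :=
  @Measure.map ℝ (ℕ → S) _ (@MeasurableSpace.pi ℕ (fun _ => S) (fun _ => ⊤))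
    (trajFun P s0) (volume.restrict (Set.Ico (0 : ℝ) 1))

/-- `s` is recurrent for `P`: the chain started at `s` returns to `s` with probability one. -/
def Recurrent {S : Type*} [Fintype S] [Nonempty S] (P : S → S → ℝ) (s : S) : Prop :=
  chainLaw P s {x | ∃ k ≥ 1, x k = s} = 1

/-- `t` is reachable from `s` under `P`: some `n`-step transition probability is positive. -/
def Reachable {S : Type*} [Fintype S] [DecidableEq S] (P : S → S → ℝ) (s t : S) : Prop :=
  ∃ n : ℕ, 0 < (Matrix.of P ^ n) s t

/-- A recurrent class of `P`: all states recurrent, mutually communicating, and closed. -/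
def IsRecurrentClass {S : Type*} [Fintype S] [Nonempty S] [DecidableEq S]
    (P : S → S → ℝ) (C : Set S) : Prop :=
  (∀ s ∈ C, Recurrent P s) ∧
  (∀ s ∈ C, ∀ t ∈ C, Reachable P s t ∧ Reachable P t s) ∧
  (∀ s ∈ C, ∀ t, t ∉ C → P s t = 0)

def IsKernel {S U : Type*} [Fintype S] [Fintype U] (Q : S → U → S → ℝ) : Prop :=
  (∀ s u s', 0 ≤ Q s u s') ∧ ∀ s u, ∑ s', Q s u s' = 1

def IsPolicy {S U : Type*} [Fintype U] (K : S → U → ℝ) : Prop :=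
  (∀ s u, 0 ≤ K s u) ∧ ∀ s, ∑ u, K s u = 1

/-- Closed-loop transition matrix `P_K s s' = ∑_u K s u * Q s u s'`. -/
def closedLoop {S U : Type*} [Fintype U] (Q : S → U → S → ℝ) (K : S → U → ℝ) : S → S → ℝ :=
  fun s s' => ∑ u, K s u * Q s u s'

/-- Marginal on states of a pmf on `S × U`. -/
def marginalS {S U : Type*} [Fintype U] (f : S × U → ℝ) : S → ℝ := fun s => ∑ u, f (s, u)

/-- The feasible set `D(Q,F)`. -/
def Feasible {S U : Type*} [Fintype S] [Fintype U] (Q : S → U → S → ℝ) (F : Set S)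
    (f : S × U → ℝ) : Prop :=
  IsPmf f ∧ (∀ s' : S, marginalS f s' = ∑ s : S, ∑ u : U, Q s u s' * f (s, u)) ∧
  ∀ s ∈ F, marginalS f s = 0

/-- The policy induced by `f` (relative to a fixed policy `G`). -/
noncomputable def inducedPolicy {S U : Type*} [Fintype U] (G : S → U → ℝ) (f : S × U → ℝ) :
    S → U → ℝ :=
  fun s u => if 0 < marginalS f s then f (s, u) / marginalS f s else G s u

/-- The set `S^R_{K,F}` of `F`-safe recurrent states under policy `K`. -/
def FSafeRecStates {S U : Type*} [Fintype S] [Nonempty S] [DecidableEq S] [Fintype U]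
    (Q : S → U → S → ℝ) (F : Set S) (K : S → U → ℝ) : Set S :=
  {s | Recurrent (closedLoop Q K) s ∧
    ∀ t, Reachable (closedLoop Q K) s t → ∀ t' ∈ F, closedLoop Q K t t' = 0}

/-- The maximal set `S^R_F = ⋃_K S^R_{K,F}` of `F`-safe recurrent states. -/
def SRF {S U : Type*} [Fintype S] [Nonempty S] [DecidableEq S] [Fintype U]
    (Q : S → U → S → ℝ) (F : Set S) : Set S :=
  ⋃ K ∈ {K : S → U → ℝ | IsPolicy K}, FSafeRecStates Q F K

/-- (i) The support of the marginal of a feasible pmf is disjoint from `F`; (ii) it is closed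
under transitions of the closed loop induced by `f`; (iii) hence no transition from the support
into `F` has positive probability. -/
theorem stmt_3 {S U : Type*} [Fintype S] [Nonempty S] [Fintype U] [Nonempty U]
    (Q : S → U → S → ℝ) (hQ : IsKernel Q) (F : Set S)
    (G : S → U → ℝ) (hG : IsPolicy G)
    (f : S × U → ℝ) (hf : Feasible Q F f) :
    (∀ s : S, 0 < marginalS f s → s ∉ F) ∧
    (∀ s s' : S, 0 < marginalS f s → 0 < closedLoop Q (inducedPolicy G f) s s' →
      0 < marginalS f s') ∧
    (∀ s s' : S, 0 < marginalS f s → s' ∈ F → closedLoop Q (inducedPolicy G f) s s' = 0) := by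
  obtain ⟨⟨hf0, _⟩, hbal, hforb⟩ := hf
  -- key: if marginal s' = 0 then closedLoop s s' = 0 for any s with marginal s > 0
  have key : ∀ s s' : S, 0 < marginalS f s → marginalS f s' = 0 →
      closedLoop Q (inducedPolicy G f) s s' = 0 := by
    intro s s' hs hs'
    have hzero : ∀ t : S, ∀ u : U, Q t u s' * f (t, u) = 0 := by
      have hsum : ∑ t : S, ∑ u : U, Q t u s' * f (t, u) = 0 := by
        rw [← hbal s']; exact hs'
      have hnn : ∀ t ∈ Finset.univ (α := S), ∀ u ∈ Finset.univ (α := U),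
          0 ≤ Q t u s' * f (t, u) := fun t _ u _ => mul_nonneg (hQ.1 t u s') (hf0 (t, u))
      intro t u
      have := (Finset.sum_eq_zero_iff_of_nonneg fun t ht =>
        Finset.sum_nonneg (hnn t ht)).mp hsum t (Finset.mem_univ t)
      exact (Finset.sum_eq_zero_iff_of_nonneg (hnn t (Finset.mem_univ t))).mp this u
        (Finset.mem_univ u)
    unfold closedLoop inducedPolicy
    apply Finset.sum_eq_zero
    intro u _
    rw [if_pos hs]
    have := hzero s u
    field_simp
    nlinarith [this]
  refine ⟨?_, ?_, ?_⟩
  · intro s hs hsF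
    exact absurd (hforb s hsF) (ne_of_gt hs)
  · intro s s' hs hcl
    rcases lt_or_eq_of_le (Finset.sum_nonneg fun u _ => hf0 (s', u) :
        (0:ℝ) ≤ marginalS f s') with h | h
    · exact h
    · exact absurd (key s s' hs h.symm) (ne_of_gt hcl)
  · intro s s' hs hsF
    exact key s s' hs (hforb s' hsF)
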